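/- Let X be a compact Hausdorff space and let μ be a diffuse regular Borel probability measure on X. For ε > 0 let Y_ε = { f ∈ C(X, ℝ) : μ(f⁻¹({t})) < ε for every t ∈ ℝ }. Then for every ε > 0 the set Y_ε is open and dense in C(X, ℝ) with respect to the uniform (sup-norm) topology; consequently Y = { f ∈ C(X, ℝ) : μ(f⁻¹({t})) = 0 for every t ∈ ℝ } is a dense G_δ subset of C(X, ℝ), and in particular nonempty. -/

import Mathlib

open MeasureTheory Set Filter Topology
open scoped ENNReal

section Aux

variable {X : Type*} [TopologicalSpace X] [CompactSpace X] [T2Space X]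
    [MeasurableSpace X] [BorelSpace X]
    {μ : Measure X} [IsProbabilityMeasure μ] [μ.Regular]

lemma exists_small_levels (hdiffuse : ∀ x : X, μ {x} = 0) {ε : ℝ≥0∞} (hε : 0 < ε) :
    ∃ w : C(X, ℝ), ∀ t : ℝ, μ (⇑w ⁻¹' {t}) < ε := by
  classical
  set δ : ℝ≥0∞ := min ε 1 / 4 with hδdef
  have hmin0 : min ε 1 ≠ 0 := (lt_min hε zero_lt_one).ne' 
  have hδ0 : δ ≠ 0 := by
    simp only [hδdef, ne_eq, ENNReal.div_eq_zero_iff]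
    push_neg
    exact ⟨hmin0, by norm_num⟩
  have hδtop : δ ≠ ∞ := by
    have : δ ≤ 1 / 4 := by
      exact ENNReal.div_le_div_right (min_le_right _ _) 4
    exact ne_top_of_le_ne_top (by norm_num) this
  have h3δ : δ + δ + δ < ε := by
    have h4 : 4 * δ = min ε 1 := ENNReal.mul_div_cancel' (by norm_num) (by norm_num)
    have h34 : 3 * δ < 4 * δ := by
      rw [mul_comm 3 δ, mul_comm 4 δ]; exact ENNReal.mul_lt_mul_right hδ0 hδtop (by norm_num)
    calc δ + δ + δ = 3 * δ := by ring
    _ < 4 * δ := h34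
    _ = min ε 1 := h4
    _ ≤ ε := min_le_left _ _
  -- small open neighborhoods
  have hU : ∀ x : X, ∃ U : Set X, {x} ⊆ U ∧ IsOpen U ∧ μ U < δ := by
    intro x
    exact Set.exists_isOpen_lt_of_lt {x} δ (by simp [hdiffuse x, pos_iff_ne_zero.2 hδ0])
  choose U hxU hUopen hUμ using hU
  obtain ⟨s, hs⟩ := isCompact_univ.elim_finite_subcover U hUopen
    (fun x _ => mem_iUnion.2 ⟨x, hxU x rfl⟩)
  set l := s.toList with hl
  set m := l.length with hm
  set V : ℕ → Set X := fun i => if h : i < l.length then U (l.get ⟨i, h⟩) else ∅ with hV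
  have hVopen : ∀ i, IsOpen (V i) := by
    intro i; by_cases h : i < l.length <;> simp [hV, h, hUopen, isOpen_empty]
  have hVμ : ∀ i, μ (V i) ≤ δ := by
    intro i; by_cases h : i < l.length <;> simp [hV, h, (hUμ _).le]
  set W : ℕ → Set X := fun k => ⋃ i ∈ Finset.range k, V i with hW
  have hWopen : ∀ k, IsOpen (W k) := fun k => isOpen_biUnion (fun i _ => hVopen i)
  have hWmono : Monotone W := by
    intro p q hpq x hx
    simp only [hW, mem_iUnion, Finset.mem_range] at hx ⊢
    obtain ⟨i, hi, hxi⟩ := hx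
    exact ⟨i, lt_of_lt_of_le hi hpq, hxi⟩
  have hW0 : W 0 = ∅ := by simp [hW]
  have hWuniv : W m = univ := by
    apply eq_univ_of_forall
    intro x
    have := hs (mem_univ x)
    simp only [Finset.mem_coe, mem_iUnion] at this
    obtain ⟨y, hy, hxy⟩ := this
    have : y ∈ l := by rw [hl]; exact Finset.mem_toList.2 hy
    obtain ⟨n, hn⟩ := List.mem_iff_get.1 this
    refine mem_iUnion₂.2 ⟨n.1, Finset.mem_range.2 n.2, ?_⟩
    have hVn : V n.1 = U y := by
      simp only [hV, n.2, dif_pos]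
      rw [Fin.eta, hn]
    rw [hVn]; exact hxy
  have hWdiff : ∀ k, μ (W (k + 1) \ W k) ≤ δ := by
    intro k
    refine le_trans (measure_mono ?_) (hVμ k)
    intro x hx
    obtain ⟨hx1, hx2⟩ := hx
    simp only [hW, mem_iUnion, Finset.mem_range] at hx1 hx2
    obtain ⟨i, hi, hxi⟩ := hx1
    rcases Nat.lt_succ_iff_lt_or_eq.1 hi with h | h
    · exact absurd ⟨i, h, hxi⟩ hx2
    · exact h ▸ hxi
  -- compact approximations
  have hC : ∀ k : ℕ, ∃ C : Set X, C ⊆ W k ∧ IsCompact C ∧ μ (W k \ C) < δ := by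
    intro k
    exact (hWopen k).measurableSet.exists_isCompact_diff_lt (measure_ne_top μ _) hδ0
  choose C hCsub hCcomp hCμ using hC
  set K : ℕ → Set X := fun k => ⋃ i ∈ Finset.range (k + 1), C i with hK
  have hKmono : Monotone K := by
    intro p q hpq x hx
    simp only [hK, mem_iUnion, Finset.mem_range] at hx ⊢
    obtain ⟨i, hi, hxi⟩ := hx
    exact ⟨i, lt_of_lt_of_le hi (Nat.succ_le_succ hpq), hxi⟩
  have hKW : ∀ k, K k ⊆ W k := by
    intro k x hx
    simp only [hK, mem_iUnion, Finset.mem_range] at hx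
    obtain ⟨i, hi, hxi⟩ := hx
    exact hWmono (Nat.lt_succ_iff.1 hi) (hCsub i hxi)
  have hKcomp : ∀ k, IsCompact (K k) := by
    intro k
    exact (Finset.range (k+1)).isCompact_biUnion (fun i _ => hCcomp i)
  have hK0 : K 0 = ∅ := by
    have : C 0 ⊆ W 0 := hCsub 0
    rw [hW0] at this
    simp [hK, subset_empty_iff.1 this]
  have hKdiff : ∀ k, μ (W k \ K k) ≤ δ := by
    intro k
    refine le_trans (measure_mono (diff_subset_diff_right ?_)) (hCμ k).le
    intro x hx
    exact mem_iUnion₂.2 ⟨k, Finset.self_mem_range_succ _, hx⟩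
  -- Urysohn functions
  have hψ : ∀ k : ℕ, ∃ ψ : C(X, ℝ), EqOn ψ 0 (W k)ᶜ ∧ EqOn ψ 1 (K k) ∧
      ∀ x, ψ x ∈ Icc (0:ℝ) 1 := by
    intro k
    exact exists_continuous_zero_one_of_isClosed (hWopen k).isClosed_compl
      ((hKcomp k).isClosed) (disjoint_compl_left.mono_right (hKW k))
  choose ψ hψ0 hψ1 hψmem using hψ
  set v : C(X, ℝ) := ∑ k ∈ Finset.Icc 1 m, ψ k with hv
  refine ⟨v, fun t => ?_⟩
  set k₀ : ℕ := ⌊(m : ℝ) + 1 - t⌋₊ with hk₀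
  have hincl : ⇑v ⁻¹' {t} ⊆ (W k₀ \ K (k₀ - 1)) ∪ (K m)ᶜ := by
    intro x hx
    simp only [mem_preimage, mem_singleton_iff] at hx
    by_cases hxm : x ∈ K m
    · have hvx : v x = ∑ k ∈ Finset.Icc 1 m, ψ k x := by simp [hv]
      have hexK : ∃ j, x ∈ K j := ⟨m, hxm⟩
      have hexW : ∃ j, x ∈ W j := ⟨m, by rw [hWuniv]; trivial⟩
      set a := Nat.find hexK with ha
      set b := Nat.find hexW with hb
      have hxa : x ∈ K a := Nat.find_spec hexK
      have hxa' : ∀ j < a, x ∉ K j := fun j hj => Nat.find_min hexK hj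
      have hxb : x ∈ W b := Nat.find_spec hexW
      have hxb' : ∀ j < b, x ∉ W j := fun j hj => Nat.find_min hexW hj
      have ham : a ≤ m := Nat.find_le hxm
      have hba : b ≤ a := Nat.find_le (hKW a hxa)
      have hb1 : 1 ≤ b := by
        rcases Nat.eq_zero_or_pos b with h | h
        · exfalso; rw [h, hW0] at hxb; exact hxb
        · exact h
      have ha1 : 1 ≤ a := le_trans hb1 hba
      -- lower bound on v x
      have hlow : ((m + 1 - a : ℕ) : ℝ) ≤ v x := by
        rw [hvx]
        have hfilt : Finset.filter (fun k => a ≤ k) (Finset.Icc 1 m) = Finset.Icc a m := by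
          ext k
          simp only [Finset.mem_filter, Finset.mem_Icc]
          omega
        calc ((m + 1 - a : ℕ) : ℝ) = ((Finset.Icc a m).card : ℝ) := by rw [Nat.card_Icc]
        _ = ∑ k ∈ Finset.Icc 1 m, (if a ≤ k then (1:ℝ) else 0) := by
            rw [Finset.sum_boole, hfilt]
        _ ≤ ∑ k ∈ Finset.Icc 1 m, ψ k x := by
            apply Finset.sum_le_sum
            intro k hk
            by_cases h : a ≤ k
            · simp only [h, if_true]
              exact (hψ1 k (hKmono h hxa)).ge
            · simp only [h, if_false]
              exact (hψmem k x).1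
      have hupp : v x ≤ ((m + 1 - b : ℕ) : ℝ) := by
        rw [hvx]
        have hfilt : Finset.filter (fun k => b ≤ k) (Finset.Icc 1 m) = Finset.Icc b m := by
          ext k
          simp only [Finset.mem_filter, Finset.mem_Icc]
          omega
        have hstep : ∑ k ∈ Finset.Icc 1 m, ψ k x ≤
            ∑ k ∈ Finset.Icc 1 m, (if b ≤ k then (1:ℝ) else 0) := by
          apply Finset.sum_le_sum
          intro k hk
          by_cases h : b ≤ k
          · simp only [h, if_true]; exact (hψmem k x).2
          · simp only [h, if_false]
            have hnW : x ∉ W k := hxb' k (not_le.1 h)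
            exact (hψ0 k hnW).le
        calc ∑ k ∈ Finset.Icc 1 m, ψ k x ≤ _ := hstep
        _ = ((m + 1 - b : ℕ) : ℝ) := by
            rw [Finset.sum_boole, hfilt, Nat.card_Icc]
      rw [hx] at hlow hupp
      have hcast1 : ((m + 1 - a : ℕ) : ℝ) = (m : ℝ) + 1 - a := by
        push_cast [Nat.cast_sub (by omega : a ≤ m + 1)]; ring
      have hcast2 : ((m + 1 - b : ℕ) : ℝ) = (m : ℝ) + 1 - b := by
        push_cast [Nat.cast_sub (by omega : b ≤ m + 1)]; ring
      rw [hcast1] at hlow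
      rw [hcast2] at hupp
      -- b ≤ k₀ ≤ a
      have hbk : b ≤ k₀ := by
        apply Nat.le_floor
        linarith
      have hka : k₀ ≤ a := by
        have hb1' : (1:ℝ) ≤ (b:ℝ) := by exact_mod_cast hb1
        have h0 : (0:ℝ) ≤ (m : ℝ) + 1 - t := by linarith
        have hfl : (k₀ : ℝ) ≤ (m : ℝ) + 1 - t := Nat.floor_le h0
        have hcst : (k₀ : ℝ) ≤ (a : ℝ) := by linarith
        exact_mod_cast hcst
      exact mem_union_left _ ⟨hWmono hbk hxb, hxa' _ (by omega)⟩
    · exact mem_union_right _ hxm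
  have hsplit : μ (W k₀ \ K (k₀ - 1)) ≤ μ (W k₀ \ W (k₀ - 1)) + μ (W (k₀ - 1) \ K (k₀ - 1)) := by
    refine le_trans (measure_mono ?_) (measure_union_le _ _)
    rintro x ⟨hx1, hx2⟩
    by_cases h : x ∈ W (k₀ - 1)
    · exact Or.inr ⟨h, hx2⟩
    · exact Or.inl ⟨hx1, h⟩
  have hb1 : μ (W k₀ \ W (k₀ - 1)) ≤ δ := by
    rcases Nat.eq_zero_or_pos k₀ with h | h
    · simp [h, hW0]
    · have hkk : k₀ - 1 + 1 = k₀ := Nat.succ_pred_eq_of_pos h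
      calc μ (W k₀ \ W (k₀ - 1)) = μ (W (k₀ - 1 + 1) \ W (k₀ - 1)) := by rw [hkk]
      _ ≤ δ := hWdiff _
  have hb3 : μ (K m)ᶜ ≤ δ := by
    have hcompl : (K m)ᶜ = W m \ K m := by rw [hWuniv]; ext x; simp
    rw [hcompl]; exact hKdiff m
  calc μ (⇑v ⁻¹' {t}) ≤ μ ((W k₀ \ K (k₀ - 1)) ∪ (K m)ᶜ) := measure_mono hincl
  _ ≤ μ (W k₀ \ K (k₀ - 1)) + μ (K m)ᶜ := measure_union_le _ _
  _ ≤ (μ (W k₀ \ W (k₀ - 1)) + μ (W (k₀ - 1) \ K (k₀ - 1))) + μ (K m)ᶜ :=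
      add_le_add_left hsplit _
  _ ≤ (δ + δ) + δ := add_le_add (add_le_add hb1 (hKdiff _)) hb3
  _ < ε := h3δ

lemma dense_small_levels (hdiffuse : ∀ x : X, μ {x} = 0) {ε : ℝ≥0∞} (hε : 0 < ε) :
    Dense {f : C(X, ℝ) | ∀ t : ℝ, μ (⇑f ⁻¹' {t}) < ε} := by
  rw [Metric.dense_iff]
  intro f η hη
  set e : ℝ≥0∞ := min ε 1 with he
  have he0 : e ≠ 0 := (lt_min hε zero_lt_one).ne'
  have hetop : e ≠ ∞ := ne_top_of_le_ne_top ENNReal.one_ne_top (min_le_right _ _)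
  have hee0 : e * e ≠ 0 := mul_ne_zero he0 he0
  have heetop : e * e ≠ ∞ := ENNReal.mul_ne_top hetop hetop
  have hε'pos : 0 < e * e / 2 := ENNReal.div_pos hee0 (by norm_num)
  obtain ⟨w, hw⟩ := exists_small_levels hdiffuse hε'pos
  set b : ℝ := η / (‖w‖ + 1) with hb
  have hwpos : (0:ℝ) < ‖w‖ + 1 := by positivity
  have hbpos : 0 < b := div_pos hη hwpos
  -- the diagonal set for w
  have hwmeas : Measurable (⇑w) := w.continuous.measurable
  have hfmeas : Measurable (⇑f) := f.continuous.measurable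
  set S : Set (X × X) := {p | w p.1 = w p.2} with hS
  have hSmeas : MeasurableSet S :=
    measurableSet_eq_fun (hwmeas.comp measurable_fst) (hwmeas.comp measurable_snd)
  have hSbound : (μ.prod μ) S ≤ e * e / 2 := by
    rw [Measure.prod_apply hSmeas]
    have : ∀ x : X, μ (Prod.mk x ⁻¹' S) ≤ e * e / 2 := by
      intro x
      have : Prod.mk x ⁻¹' S = ⇑w ⁻¹' {w x} := by
        ext y; simp [hS, eq_comm]
      rw [this]
      exact (hw (w x)).le
    calc ∫⁻ x, μ (Prod.mk x ⁻¹' S) ∂μ ≤ ∫⁻ _, e * e / 2 ∂μ := lintegral_mono this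
    _ = e * e / 2 := by simp
  set s : Set (ℝ × X × X) :=
    {q | f q.2.1 - f q.2.2 = q.1 * (w q.2.2 - w q.2.1)} with hs
  have hsmeas : MeasurableSet s := by
    apply measurableSet_eq_fun
    · exact (hfmeas.comp (measurable_fst.comp measurable_snd)).sub
        (hfmeas.comp (measurable_snd.comp measurable_snd))
    · exact measurable_fst.mul ((hwmeas.comp (measurable_snd.comp measurable_snd)).sub
        (hwmeas.comp (measurable_fst.comp measurable_snd)))
  set ν : Measure ℝ := volume.restrict (Icc (0:ℝ) b) with hν
  have key1 : (ν.prod (μ.prod μ)) s = ∫⁻ c, (μ.prod μ) (Prod.mk c ⁻¹' s) ∂ν :=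
    Measure.prod_apply hsmeas
  have key2 : (ν.prod (μ.prod μ)) s ≤ ENNReal.ofReal b * (e * e / 2) := by
    rw [Measure.prod_apply_symm hsmeas]
    have hpt : ∀ p : X × X, ν ((fun c => (c, p)) ⁻¹' s) ≤
        S.indicator (fun _ => ENNReal.ofReal b) p := by
      intro p
      by_cases hp : p ∈ S
      · rw [indicator_of_mem hp]
        calc ν ((fun c => (c, p)) ⁻¹' s) ≤ ν univ := measure_mono (subset_univ _)
        _ = ENNReal.ofReal b := by
            rw [hν, Measure.restrict_apply_univ, Real.volume_Icc]
            norm_num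
      · rw [indicator_of_notMem hp]
        have hne : w p.2 - w p.1 ≠ 0 := by
          simp only [hS, mem_setOf_eq] at hp
          intro h
          exact hp (by linarith [sub_eq_zero.1 h])
        have hsub : ((fun c => (c, p)) ⁻¹' s) ⊆ {(f p.1 - f p.2) / (w p.2 - w p.1)} := by
          intro c hc
          simp only [hs, mem_preimage, mem_setOf_eq] at hc
          simp only [mem_singleton_iff]
          field_simp
          linarith
        calc ν ((fun c => (c, p)) ⁻¹' s) ≤ ν {(f p.1 - f p.2) / (w p.2 - w p.1)} :=
            measure_mono hsub
        _ ≤ volume {(f p.1 - f p.2) / (w p.2 - w p.1)} := Measure.restrict_le_self _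
        _ = 0 := Real.volume_singleton
        _ ≤ 0 := le_refl _
    calc ∫⁻ p, ν ((fun c => (c, p)) ⁻¹' s) ∂(μ.prod μ)
        ≤ ∫⁻ p, S.indicator (fun _ => ENNReal.ofReal b) p ∂(μ.prod μ) := lintegral_mono hpt
    _ = ENNReal.ofReal b * (μ.prod μ) S := by
        rw [lintegral_indicator hSmeas]; simp
    _ ≤ ENNReal.ofReal b * (e * e / 2) := by
        exact mul_le_mul_right hSbound _
  -- main claim
  have hclaim : ∃ c ∈ Icc (0:ℝ) b, ∀ t : ℝ, μ (⇑(f + c • w) ⁻¹' {t}) < e := by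
    by_contra hcon
    push_neg at hcon
    have hlower : ∀ c ∈ Icc (0:ℝ) b, e * e ≤ (μ.prod μ) (Prod.mk c ⁻¹' s) := by
      intro c hc
      obtain ⟨t, ht⟩ := hcon c hc
      have hsub : (⇑(f + c • w) ⁻¹' {t}) ×ˢ (⇑(f + c • w) ⁻¹' {t}) ⊆ Prod.mk c ⁻¹' s := by
        rintro ⟨x, y⟩ ⟨hx, hy⟩
        simp only [mem_preimage, mem_singleton_iff, ContinuousMap.add_apply,
          ContinuousMap.smul_apply, smul_eq_mul] at hx hy
        simp only [hs, mem_preimage, mem_setOf_eq]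
        linarith
      calc e * e ≤ μ (⇑(f + c • w) ⁻¹' {t}) * μ (⇑(f + c • w) ⁻¹' {t}) :=
          mul_le_mul' ht ht
      _ = (μ.prod μ) ((⇑(f + c • w) ⁻¹' {t}) ×ˢ (⇑(f + c • w) ⁻¹' {t})) :=
          (Measure.prod_prod _ _).symm
      _ ≤ (μ.prod μ) (Prod.mk c ⁻¹' s) := measure_mono hsub
    have hint : e * e * ENNReal.ofReal b ≤ (ν.prod (μ.prod μ)) s := by
      rw [key1]
      have h1 : ∫⁻ _, e * e ∂ν = e * e * ENNReal.ofReal b := by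
        rw [lintegral_const, hν, Measure.restrict_apply_univ, Real.volume_Icc, sub_zero]
      rw [← h1]
      exact setLIntegral_mono (measurable_measure_prodMk_left hsmeas) hlower
    have hbad : e * e * ENNReal.ofReal b ≤ ENNReal.ofReal b * (e * e / 2) :=
      le_trans hint key2
    have hob0 : ENNReal.ofReal b ≠ 0 := by
      simp only [ne_eq, ENNReal.ofReal_eq_zero, not_le]; exact hbpos
    have hobtop : ENNReal.ofReal b ≠ ∞ := ENNReal.ofReal_ne_top
    have heq : ENNReal.ofReal b * (e * e / 2) = (e * e * ENNReal.ofReal b) / 2 := by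
      rw [ENNReal.div_eq_inv_mul, ENNReal.div_eq_inv_mul]; ring
    rw [heq] at hbad
    have hfin : e * e * ENNReal.ofReal b ≠ ∞ := ENNReal.mul_ne_top heetop hobtop
    have hpos : e * e * ENNReal.ofReal b ≠ 0 := mul_ne_zero hee0 hob0
    exact absurd hbad (not_le.2 (ENNReal.half_lt_self hpos hfin))
  obtain ⟨c, hc, hcgood⟩ := hclaim
  refine ⟨f + c • w, ?_, fun t => lt_of_lt_of_le (hcgood t) (min_le_left _ _)⟩
  rw [Metric.mem_ball, dist_eq_norm]
  have : f + c • w - f = c • w := by ring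
  rw [this]
  have hns : ‖c • w‖ = ‖c‖ * ‖w‖ := norm_smul c w
  rw [hns]
  have hstep1 : ‖c‖ * ‖w‖ ≤ b * ‖w‖ := by
    apply mul_le_mul_of_nonneg_right _ (norm_nonneg w)
    rw [Real.norm_eq_abs, abs_of_nonneg hc.1]
    exact hc.2
  have hstep2 : b * ‖w‖ < η := by
    rw [hb, div_mul_eq_mul_div, div_lt_iff₀ hwpos]
    nlinarith [norm_nonneg w]
  linarith

lemma isOpen_small_levels {ε : ℝ≥0∞} (hε : 0 < ε) :
    IsOpen {f : C(X, ℝ) | ∀ t : ℝ, μ (⇑f ⁻¹' {t}) < ε} := by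
  rw [Metric.isOpen_iff]
  intro f hf
  simp only [mem_setOf_eq] at hf
  have hclaim : ∃ δ : ℝ, 0 < δ ∧ ∀ t : ℝ, μ (⇑f ⁻¹' Icc (t - δ) (t + δ)) < ε := by
    by_contra hcon
    push_neg at hcon
    have hT : ∀ n : ℕ, ∃ t : ℝ, ε ≤ μ (⇑f ⁻¹' Icc (t - 1/(n+1)) (t + 1/(n+1))) := by
      intro n
      exact hcon (1/(n+1)) (by positivity)
    choose T hT using hT
    have hTmem : ∀ n, T n ∈ Icc (-(‖f‖+1)) (‖f‖+1) := by
      intro n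
      have hne : (⇑f ⁻¹' Icc (T n - 1/(n+1)) (T n + 1/(n+1))).Nonempty := by
        by_contra hemp
        rw [not_nonempty_iff_eq_empty] at hemp
        have := hT n
        rw [hemp] at this
        simp only [measure_empty, nonpos_iff_eq_zero] at this
        exact absurd this hε.ne' 
      obtain ⟨x, hx⟩ := hne
      simp only [mem_preimage, mem_Icc] at hx
      have hfx : |f x| ≤ ‖f‖ := by
        rw [← Real.norm_eq_abs]
        exact f.norm_coe_le_norm x
      have h1 : (1:ℝ)/(n+1) ≤ 1 := by
        rw [div_le_one (by positivity)]
        simp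
      rw [mem_Icc]
      rw [abs_le] at hfx
      constructor <;> linarith [hx.1, hx.2]
    obtain ⟨t0, _, φ, hφmono, hφtend⟩ :=
      (isCompact_Icc (a := -(‖f‖+1)) (b := ‖f‖+1)).tendsto_subseq hTmem
    have hkey : ∀ r : ℝ, 0 < r → ε ≤ μ (⇑f ⁻¹' Icc (t0 - r) (t0 + r)) := by
      intro r hr
      have h1 : ∀ᶠ k in atTop, |T (φ k) - t0| < r/2 := by
        have := Metric.tendsto_nhds.1 hφtend (r/2) (by positivity)
        simpa [Real.dist_eq] using this
      have h2 : ∀ᶠ k in atTop, (1:ℝ)/(φ k + 1) < r/2 := by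
        have hφk : Tendsto (fun k => (1:ℝ)/(φ k + 1)) atTop (𝓝 0) := by
          apply Tendsto.comp tendsto_one_div_add_atTop_nhds_zero_nat
          exact hφmono.tendsto_atTop
        have := Metric.tendsto_nhds.1 hφk (r/2) (by positivity)
        filter_upwards [this] with k hk
        rw [Real.dist_eq, sub_zero] at hk
        exact lt_of_abs_lt hk
      obtain ⟨k, hk1, hk2⟩ := (h1.and h2).exists
      refine le_trans (hT (φ k)) (measure_mono ?_)
      apply preimage_mono
      intro y hy
      rw [mem_Icc] at hy ⊢
      rw [abs_lt] at hk1
      constructor <;> linarith [hy.1, hy.2]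
    have hfinal : ε ≤ μ (⇑f ⁻¹' {t0}) := by
      have hiInt : ⋂ n : ℕ, (⇑f ⁻¹' Icc (t0 - 1/(n+1)) (t0 + 1/(n+1))) = ⇑f ⁻¹' {t0} := by
        ext x
        simp only [mem_iInter, mem_preimage, mem_Icc, mem_singleton_iff]
        constructor
        · intro h
          have habs : ∀ n : ℕ, |f x - t0| ≤ 1/(n+1) := by
            intro n
            rw [abs_le]
            constructor <;> linarith [(h n).1, (h n).2]
          have : |f x - t0| ≤ 0 := by
            by_contra hpos
            push_neg at hpos
            obtain ⟨n, hn⟩ := exists_nat_one_div_lt hpos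
            exact absurd (habs n) (not_le.2 hn)
          have := abs_nonneg (f x - t0)
          have : |f x - t0| = 0 := le_antisymm ‹|f x - t0| ≤ 0› this
          rw [abs_eq_zero] at this
          linarith
        · intro h n
          have h1 : (0:ℝ) < 1/(n+1) := by positivity
          constructor <;> linarith
      rw [← hiInt]
      have htend := tendsto_measure_iInter_atTop
        (μ := μ) (s := fun n : ℕ => ⇑f ⁻¹' Icc (t0 - 1/(n+1)) (t0 + 1/(n+1)))
        (fun n => ((isClosed_Icc.preimage f.continuous).measurableSet).nullMeasurableSet)
        (fun a b hab => preimage_mono (by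
          apply Icc_subset_Icc <;>
          · have hc : ((a:ℝ)) ≤ (b:ℝ) := Nat.cast_le.2 hab
            have h1d : (1:ℝ)/(b+1) ≤ 1/(a+1) := by
              apply one_div_le_one_div_of_le (by positivity)
              linarith
            linarith))
        ⟨0, measure_ne_top μ _⟩
      exact ge_of_tendsto htend (Eventually.of_forall fun n => hkey (1/(n+1)) (by positivity))
    exact absurd (hf t0) (not_lt.2 hfinal)
  obtain ⟨δ, hδpos, hδ⟩ := hclaim
  refine ⟨δ, hδpos, ?_⟩
  intro g hg
  simp only [Metric.mem_ball] at hg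
  intro t
  refine lt_of_le_of_lt (measure_mono ?_) (hδ t)
  intro x hx
  simp only [mem_preimage, mem_singleton_iff] at hx
  simp only [mem_preimage, mem_Icc]
  have hd : dist (g x) (f x) ≤ dist g f := ContinuousMap.dist_apply_le_dist x
  rw [Real.dist_eq] at hd
  rw [hx] at hd
  have := abs_le.1 (le_trans hd hg.le)
  constructor <;> linarith [this.1, this.2]


end Aux

/-- For a diffuse regular Borel probability measure `μ` on a compact Hausdorff space `X`,
each set `Y_ε = {f ∈ C(X,ℝ) : μ(f⁻¹{t}) < ε for all t}` is open and dense in `C(X,ℝ)`,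
and consequently `Y = {f : μ(f⁻¹{t}) = 0 for all t}` is a dense Gδ set, in particular
nonempty. -/
theorem level_sets_null_dense_Gdelta
    (X : Type*) [TopologicalSpace X] [CompactSpace X] [T2Space X]
    [MeasurableSpace X] [BorelSpace X]
    (μ : Measure X) [IsProbabilityMeasure μ] [μ.Regular]
    (hdiffuse : ∀ x : X, μ {x} = 0) :
    (∀ ε : ℝ≥0∞, 0 < ε →
        IsOpen {f : C(X, ℝ) | ∀ t : ℝ, μ (⇑f ⁻¹' {t}) < ε} ∧
        Dense {f : C(X, ℝ) | ∀ t : ℝ, μ (⇑f ⁻¹' {t}) < ε}) ∧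
      IsGδ {f : C(X, ℝ) | ∀ t : ℝ, μ (⇑f ⁻¹' {t}) = 0} ∧
      Dense {f : C(X, ℝ) | ∀ t : ℝ, μ (⇑f ⁻¹' {t}) = 0} ∧
      {f : C(X, ℝ) | ∀ t : ℝ, μ (⇑f ⁻¹' {t}) = 0}.Nonempty := by
  have hOD : ∀ ε : ℝ≥0∞, 0 < ε →
      IsOpen {f : C(X, ℝ) | ∀ t : ℝ, μ (⇑f ⁻¹' {t}) < ε} ∧
      Dense {f : C(X, ℝ) | ∀ t : ℝ, μ (⇑f ⁻¹' {t}) < ε} :=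
    fun ε hε => ⟨isOpen_small_levels hε, dense_small_levels hdiffuse hε⟩
  have hpos : ∀ n : ℕ, (0:ℝ≥0∞) < ((n : ℝ≥0∞))⁻¹ :=
    fun n => ENNReal.inv_pos.2 (ENNReal.natCast_ne_top n)
  have hYeq : {f : C(X, ℝ) | ∀ t : ℝ, μ (⇑f ⁻¹' {t}) = 0} =
      ⋂ n : ℕ, {f : C(X, ℝ) | ∀ t : ℝ, μ (⇑f ⁻¹' {t}) < ((n : ℝ≥0∞))⁻¹} := by
    ext f
    simp only [mem_setOf_eq, mem_iInter]
    constructor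
    · intro h n t
      rw [h t]
      exact hpos n
    · intro h t
      by_contra h0
      obtain ⟨n, hn⟩ := ENNReal.exists_inv_nat_lt h0
      exact absurd (h n t) (not_lt.2 hn.le)
  have hGδ : IsGδ {f : C(X, ℝ) | ∀ t : ℝ, μ (⇑f ⁻¹' {t}) = 0} := by
    rw [hYeq]
    exact IsGδ.iInter_of_isOpen fun n => (hOD _ (hpos n)).1
  have hDense : Dense {f : C(X, ℝ) | ∀ t : ℝ, μ (⇑f ⁻¹' {t}) = 0} := by
    rw [hYeq]
    have : BaireSpace C(X, ℝ) := by
      set_option synthInstance.maxHeartbeats 1000000 in infer_instance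
    exact dense_iInter_of_isOpen (fun n => (hOD _ (hpos n)).1) (fun n => (hOD _ (hpos n)).2)
  have : Nonempty C(X, ℝ) := ⟨0⟩
  exact ⟨hOD, hGδ, hDense, hDense.nonempty⟩
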